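/- Let C ⊂ ℝ³ be a C² injective compact curve, η_n the cutoff functions built from a smooth profile χ, and φ : ℝ³ → ℝ³ a smooth compactly supported vector field with div φ = 0 pointwise. Set g_n(x) = ⟪φ(x), ∇η_n(x)⟫. Then there exist n₀ ∈ ℕ and a constant C₀ > 0 (depending on φ, C and χ but not on n) such that for all n > n₀: ∫_{ℝ³} g_n(x) dx = 0, and for every p ∈ [1, ∞), ‖g_n‖_{L^p(ℝ³)} ≤ C₀ · n^{1 − 2/p}. -/

import Mathlib

open MeasureTheory Metric Set Filter
open scoped RealInnerProductSpace ContDiff SchwartzMap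
open scoped NNReal ENNReal Topology

noncomputable section

abbrev E3 := EuclideanSpace ℝ (Fin 3)
/-- The divergence of a vector field on ℝ³, with partial derivatives taken along the
standard basis vectors via `fderiv`. -/
def div3 (v : E3 → E3) (x : E3) : ℝ :=
  ∑ i, fderiv ℝ v x (EuclideanSpace.single i 1) i

lemma aux_slope_tendsto {u : E3 → ℝ} {x : E3} (e : E3) (hx : DifferentiableAt ℝ u x) :
    Tendsto (fun h : ℝ => (u (x + h • e) - u x) / h) (𝓝[≠] 0) (𝓝 (fderiv ℝ u x e)) := by
  have h1 : HasDerivAt (fun t : ℝ => x + t • e) e 0 := by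
    simpa using ((hasDerivAt_id (0:ℝ)).smul_const e).const_add x
  have hcurve : HasDerivAt (fun t : ℝ => u (x + t • e)) (fderiv ℝ u x e) 0 := by
    have hx' : HasFDerivAt u (fderiv ℝ u x) (x + (0:ℝ) • e) := by
      simpa using hx.hasFDerivAt
    have := hx'.comp_hasDerivAt 0 h1
    exact this
  have := hcurve.tendsto_slope_zero
  refine this.congr (fun h => ?_)
  simp [div_eq_inv_mul, smul_eq_mul]

lemma integrable_of_bdd_compact {f : E3 → ℝ} (hm : AEStronglyMeasurable f volume)
    {K : Set E3} (hK : IsCompact K) (hKc : MeasurableSet K) {M : ℝ}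
    (hsupp : ∀ x, x ∉ K → f x = 0) (hbd : ∀ x, |f x| ≤ M) : Integrable f := by
  have hind : Integrable (K.indicator (fun _ => M)) := by
    rw [integrable_indicator_iff hKc]
    exact integrableOn_const hK.measure_lt_top.ne
  refine hind.mono' hm (Filter.Eventually.of_forall (fun x => ?_))
  by_cases hx : x ∈ K
  · simpa [Set.indicator_of_mem hx] using hbd x
  · simp [Set.indicator_of_notMem hx, hsupp x hx]
lemma ibp_dir (u : E3 → ℝ) {K : ℝ≥0} (hu : LipschitzWith K u)
    (f : E3 → ℝ) (hf : ContDiff ℝ ∞ f) (hfs : HasCompactSupport f) (e : E3) :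
    ∫ x : E3, f x * fderiv ℝ u x e = - ∫ x : E3, u x * fderiv ℝ f x e := by
  have huc : Continuous u := hu.continuous
  have hfc : Continuous f := hf.continuous
  have hfd : Differentiable ℝ f := hf.differentiable (by simp)
  -- Lipschitz constant for f
  have hdf_cont : Continuous (fderiv ℝ f) := hf.continuous_fderiv (by simp)
  obtain ⟨M, hM⟩ := (hfs.fderiv (𝕜 := ℝ)).exists_bound_of_continuous hdf_cont
  have hM0 : 0 ≤ M := le_trans (norm_nonneg _) (hM 0)
  have hflip : LipschitzWith M.toNNReal f := by
    apply lipschitzWith_of_nnnorm_fderiv_le hfd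
    intro x
    rw [← NNReal.coe_le_coe, coe_nnnorm, Real.coe_toNNReal _ hM0]
    exact hM x
  -- the compact set T
  set T : Set E3 := Metric.cthickening (‖e‖ + 1) (tsupport f) with hT
  have hTc : IsCompact T := hfs.cthickening
  obtain ⟨Bu, hBu⟩ := hTc.exists_bound_of_continuousOn huc.continuousOn
  -- part 1 : difference quotients on u
  set D : E3 → ℝ := fun x => fderiv ℝ u x e with hD
  have hDm : Measurable D := measurable_fderiv_apply_const ℝ (f := u) e
  set A : ℝ → ℝ := fun h => ∫ x : E3, f x * ((u (x + h • e) - u x) / h) with hA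
  have hquot : ∀ h : ℝ, h ≠ 0 → ∀ x : E3, |(u (x + h • e) - u x) / h| ≤ (K : ℝ) * ‖e‖ := by
    intro h hh x
    rw [abs_div]
    rw [div_le_iff₀ (abs_pos.2 hh)]
    have := hu.dist_le_mul (x + h • e) x
    simp only [Real.dist_eq, dist_eq_norm] at this
    calc |u (x + h • e) - u x| ≤ (K : ℝ) * ‖x + h • e - x‖ := this
      _ = (K : ℝ) * ‖e‖ * |h| := by
          rw [add_sub_cancel_left, norm_smul, Real.norm_eq_abs]; ring
  have T1 : Tendsto A (𝓝[≠] (0:ℝ)) (𝓝 (∫ x : E3, f x * D x)) := by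
    apply tendsto_integral_filter_of_dominated_convergence
      (bound := fun x => ‖f x‖ * ((K : ℝ) * ‖e‖))
    · refine Filter.Eventually.of_forall (fun h => ?_)
      exact ((hfc.mul (((huc.comp (continuous_id.add continuous_const)).sub huc).div_const h)).aestronglyMeasurable)
    · filter_upwards [self_mem_nhdsWithin] with h hh
      refine Filter.Eventually.of_forall (fun x => ?_)
      rw [norm_mul]
      exact mul_le_mul_of_nonneg_left (by rw [Real.norm_eq_abs]; exact hquot h hh x)
        (norm_nonneg _)
    · exact ((hfc.norm.mul continuous_const).integrable_of_hasCompactSupport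
        (hfs.norm.mul_right))
    · filter_upwards [hu.ae_differentiableAt] with x hx
      exact (aux_slope_tendsto e hx).const_mul (f x)
  -- part 2 : switch the quotient to f
  set Bfun : ℝ → E3 → ℝ := fun h x => ((f (x - h • e) - f x) / h) * u x with hB
  have T2 : ∀ h : ℝ, h ≠ 0 → A h = ∫ x : E3, Bfun h x := by
    intro h hh
    have i1 : Integrable (fun x : E3 => f x * u (x + h • e)) := by
      exact Continuous.integrable_of_hasCompactSupport
        (hfc.mul (huc.comp (continuous_id.add continuous_const))) hfs.mul_right
    have i2 : Integrable (fun x : E3 => f x * u x) :=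
      (hfc.mul huc).integrable_of_hasCompactSupport hfs.mul_right
    have i3 : Integrable (fun x : E3 => f (x - h • e) * u x) := by
      have hcs : HasCompactSupport (fun x : E3 => f (x - h • e)) := by
        have := hfs.comp_homeomorph (Homeomorph.addRight (-(h • e)))
        simpa [sub_eq_add_neg, Function.comp_def] using this
      exact Continuous.integrable_of_hasCompactSupport
        ((hfc.comp (continuous_id.sub continuous_const)).mul huc) hcs.mul_right
    have trans : ∫ x : E3, f x * u (x + h • e) = ∫ x : E3, f (x - h • e) * u x := by
      have := MeasureTheory.integral_add_right_eq_self
        (μ := (volume : Measure E3)) (fun x : E3 => f (x - h • e) * u x) (h • e)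
      rw [← this]
      congr 1
      funext x
      simp
    have step0 : (fun x : E3 => f x * ((u (x + h • e) - u x) / h))
        = fun x : E3 => (f x * u (x + h • e) - f x * u x) / h := by
      funext x; ring
    calc A h = ∫ x : E3, (f x * u (x + h • e) - f x * u x) / h := by
          show (∫ x : E3, f x * ((u (x + h • e) - u x) / h)) = _
          rw [step0]
      _ = (∫ x : E3, (f x * u (x + h • e) - f x * u x)) / h := integral_div h _
      _ = ((∫ x : E3, f x * u (x + h • e)) - ∫ x : E3, f x * u x) / h := by
          rw [integral_sub i1 i2]
      _ = ((∫ x : E3, f (x - h • e) * u x) - ∫ x : E3, f x * u x) / h := by rw [trans]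
      _ = (∫ x : E3, (f (x - h • e) * u x - f x * u x)) / h := by
          rw [integral_sub i3 i2]
      _ = ∫ x : E3, Bfun h x := by
          rw [← integral_div]
          congr 1; funext x; simp only [hB]; ring
  -- part 3 : limit of Bfun integrals
  have T3 : Tendsto (fun h => ∫ x : E3, Bfun h x) (𝓝[≠] (0:ℝ))
      (𝓝 (∫ x : E3, (-(fderiv ℝ f x e)) * u x)) := by
    apply tendsto_integral_filter_of_dominated_convergence
      (bound := T.indicator (fun _ => M * ‖e‖ * Bu))
    · refine Filter.Eventually.of_forall (fun h => ?_)
      exact ((((hfc.comp (continuous_id.sub continuous_const)).sub hfc).div_const h).mul huc).aestronglyMeasurable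
    · have hsmall : ∀ᶠ h : ℝ in 𝓝[≠] (0:ℝ), |h| ≤ 1 := by
        apply Filter.eventually_inf_principal.2
        filter_upwards [Metric.ball_mem_nhds (0:ℝ) one_pos] with h hh _
        exact le_of_lt (by simpa [Real.dist_eq] using hh)
      filter_upwards [hsmall, self_mem_nhdsWithin] with h hh1 hh0
      refine Filter.Eventually.of_forall (fun x => ?_)
      by_cases hx : x ∈ T
      · rw [Set.indicator_of_mem hx]
        have q1 : |(f (x - h • e) - f x) / h| ≤ M * ‖e‖ := by
          rw [abs_div, div_le_iff₀ (abs_pos.2 hh0)]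
          have := hflip.dist_le_mul (x - h • e) x
          simp only [Real.dist_eq, dist_eq_norm, Real.coe_toNNReal _ hM0] at this
          calc |f (x - h • e) - f x| ≤ M * ‖x - h • e - x‖ := this
            _ = M * ‖e‖ * |h| := by
                rw [sub_sub_cancel_left, norm_neg, norm_smul, Real.norm_eq_abs]; ring
        have q2 : |u x| ≤ Bu := by simpa using hBu x hx
        rw [Real.norm_eq_abs, abs_mul]
        exact mul_le_mul q1 q2 (abs_nonneg _) (mul_nonneg hM0 (norm_nonneg e))
      · rw [Set.indicator_of_notMem hx]
        have hx1 : x ∉ tsupport f := fun hmem =>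
          hx (Metric.self_subset_cthickening _ hmem)
        have hx2 : x - h • e ∉ tsupport f := by
          intro hmem
          apply hx
          apply Metric.mem_cthickening_of_dist_le x (x - h • e) _ _ hmem
          rw [dist_eq_norm]
          have : ‖x - (x - h • e)‖ = |h| * ‖e‖ := by
            rw [sub_sub_cancel, norm_smul, Real.norm_eq_abs]
          rw [this]
          nlinarith [norm_nonneg e, abs_nonneg h]
        simp [hB, image_eq_zero_of_notMem_tsupport hx1, image_eq_zero_of_notMem_tsupport hx2]
    · rw [integrable_indicator_iff (hTc.isClosed.measurableSet)]
      exact integrableOn_const hTc.measure_lt_top.ne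
    · refine Filter.Eventually.of_forall (fun x => ?_)
      have hdx : DifferentiableAt ℝ f x := hfd x
      have := (aux_slope_tendsto (-e) hdx).mul_const (u x)
      simp only [map_neg] at this
      refine this.congr (fun h => ?_)
      simp only [hB]
      congr 2
      simp [sub_eq_add_neg, smul_neg]
  -- combine
  have T1' : Tendsto (fun h => ∫ x : E3, Bfun h x) (𝓝[≠] (0:ℝ)) (𝓝 (∫ x : E3, f x * D x)) := by
    apply T1.congr'
    filter_upwards [self_mem_nhdsWithin] with h hh
    exact T2 h hh
  have := tendsto_nhds_unique T1' T3
  rw [hD] at this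
  rw [this, ← integral_neg]
  congr 1; funext x; ring
lemma ibp_div (u : E3 → ℝ) {K : ℝ≥0} (hu : LipschitzWith K u)
    (φ : E3 → E3) (hφ : ContDiff ℝ ∞ φ) (hφs : HasCompactSupport φ) :
    ∫ x : E3, fderiv ℝ u x (φ x) = - ∫ x : E3, u x * div3 φ x := by
  have huc : Continuous u := hu.continuous
  have hφc : Continuous φ := hφ.continuous
  have hφd : Differentiable ℝ φ := hφ.differentiable (by simp)
  set e : Fin 3 → E3 := fun i => EuclideanSpace.single i 1 with he
  set φc : Fin 3 → E3 → ℝ := fun i x => φ x i with hφcdef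
  have hproj : ∀ i, (φc i) = fun x => (EuclideanSpace.proj (𝕜 := ℝ) i) (φ x) := by
    intro i; funext x; simp [φc, EuclideanSpace.proj]
  have hφci : ∀ i, ContDiff ℝ ∞ (φc i) := by
    intro i
    rw [hproj i]
    exact (EuclideanSpace.proj (𝕜 := ℝ) i).contDiff.comp hφ
  have hφcs : ∀ i, HasCompactSupport (φc i) := by
    intro i
    exact HasCompactSupport.comp_left (g := fun v : E3 => v i) hφs rfl
  have hφcfderiv : ∀ i x, fderiv ℝ (φc i) x (e i) = fderiv ℝ φ x (e i) i := by
    intro i x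
    rw [hproj i]
    change fderiv ℝ (⇑(EuclideanSpace.proj (𝕜 := ℝ) i) ∘ φ) x (e i) = _
    rw [fderiv_comp x (EuclideanSpace.proj (𝕜 := ℝ) i).differentiableAt (hφd x)]
    rw [ContinuousLinearMap.comp_apply, ContinuousLinearMap.fderiv]; rfl
  have hpoint : ∀ x : E3, fderiv ℝ u x (φ x) = ∑ i, φc i x * fderiv ℝ u x (e i) := by
    intro x
    have hdecomp : φ x = ∑ i, φc i x • e i := by
      ext j
      rw [WithLp.ofLp_sum, Finset.sum_apply]
      simp only [PiLp.smul_apply, he, EuclideanSpace.single_apply, smul_eq_mul,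
        mul_ite, mul_one, mul_zero]
      simp [φc]
    rw [hdecomp, map_sum]
    congr 1
    funext i
    rw [(fderiv ℝ u x).map_smul, smul_eq_mul]
  have hint : ∀ i, Integrable (fun x : E3 => φc i x * fderiv ℝ u x (e i)) := by
    intro i
    obtain ⟨Bi, hBi⟩ := (hφcs i).exists_bound_of_continuous (hφci i).continuous
    have hBi0 : 0 ≤ Bi := le_trans (norm_nonneg _) (hBi 0)
    apply integrable_of_bdd_compact (f := fun x => φc i x * fderiv ℝ u x (e i)) (K := tsupport (φc i)) (M := Bi * ((K : ℝ) * ‖e i‖))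
      ((((hφci i).continuous.measurable).mul
        (measurable_fderiv_apply_const ℝ (f := u) (e i))).aestronglyMeasurable)
      (hφcs i) (isClosed_tsupport _).measurableSet
      (fun x hx => by rw [image_eq_zero_of_notMem_tsupport hx, zero_mul])
    intro x
    rw [abs_mul]
    have h1 : |φc i x| ≤ Bi := by simpa using hBi x
    have h2 : |fderiv ℝ u x (e i)| ≤ (K : ℝ) * ‖e i‖ := by
      rw [← Real.norm_eq_abs]
      calc ‖fderiv ℝ u x (e i)‖ ≤ ‖fderiv ℝ u x‖ * ‖e i‖ := (fderiv ℝ u x).le_opNorm (e i)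
        _ ≤ (K : ℝ) * ‖e i‖ :=
            mul_le_mul_of_nonneg_right (norm_fderiv_le_of_lipschitz ℝ hu) (norm_nonneg _)
    exact mul_le_mul h1 h2 (abs_nonneg _) hBi0
  have hint2 : ∀ i, Integrable (fun x : E3 => u x * fderiv ℝ (φc i) x (e i)) := by
    intro i
    have hcont : Continuous (fun x : E3 => fderiv ℝ (φc i) x (e i)) := by
      exact ((hφci i).continuous_fderiv (by simp)).clm_apply continuous_const
    have hcs : HasCompactSupport (fun x : E3 => fderiv ℝ (φc i) x (e i)) :=
      HasCompactSupport.comp_left (g := fun L : E3 →L[ℝ] ℝ => L (e i))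
        ((hφcs i).fderiv (𝕜 := ℝ)) rfl
    exact (huc.mul hcont).integrable_of_hasCompactSupport hcs.mul_left
  calc ∫ x : E3, fderiv ℝ u x (φ x) = ∫ x : E3, ∑ i, φc i x * fderiv ℝ u x (e i) := by
        simp_rw [hpoint]
    _ = ∑ i, ∫ x : E3, φc i x * fderiv ℝ u x (e i) :=
        integral_finset_sum _ (fun i _ => hint i)
    _ = ∑ i, -∫ x : E3, u x * fderiv ℝ (φc i) x (e i) :=
        Finset.sum_congr rfl (fun i _ => ibp_dir u hu (φc i) (hφci i) (hφcs i) (e i))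
    _ = - ∑ i, ∫ x : E3, u x * fderiv ℝ (φc i) x (e i) := by
        rw [Finset.sum_neg_distrib]
    _ = - ∫ x : E3, ∑ i, u x * fderiv ℝ (φc i) x (e i) := by
        rw [integral_finset_sum _ (fun i _ => hint2 i)]
    _ = - ∫ x : E3, u x * div3 φ x := by
        have hpt : ∀ x : E3, ∑ i, u x * fderiv ℝ (φc i) x (e i) = u x * div3 φ x := by
          intro x
          rw [div3, Finset.mul_sum]
          exact Finset.sum_congr rfl (fun i _ => by rw [hφcfderiv i x])
        simp_rw [hpt]
lemma gamma_lip {γ : ℝ → E3} {L : ℝ} (hγ : Differentiable ℝ γ)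
    (harc : ∀ s ∈ Set.Icc (0:ℝ) L, ‖deriv γ s‖ = 1) :
    LipschitzOnWith 1 γ (Set.Icc 0 L) := by
  apply (convex_Icc (0:ℝ) L).lipschitzOnWith_of_nnnorm_hasFDerivWithin_le
    (f' := fun s => ContinuousLinearMap.smulRight (1 : ℝ →L[ℝ] ℝ) (deriv γ s))
  · intro s _
    exact ((hγ s).hasDerivAt.hasFDerivAt).hasFDerivWithinAt
  · intro s hs
    rw [← NNReal.coe_le_coe, coe_nnnorm, NNReal.coe_one]
    rw [ContinuousLinearMap.norm_smulRight_apply, harc s hs, mul_one,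
      ContinuousLinearMap.one_def]
    exact ContinuousLinearMap.norm_id_le

lemma tube_measure {γ : ℝ → E3} {L : ℝ} (hL : 0 < L) (hγ : Differentiable ℝ γ)
    (harc : ∀ s ∈ Set.Icc (0:ℝ) L, ‖deriv γ s‖ = 1) {n : ℕ} (hn : 1 ≤ n) :
    volume {x : E3 | Metric.infDist x (γ '' Set.Icc 0 L) ≤ 2 / n} ≤
      ENNReal.ofReal ((L + 2) * 64 / (n : ℝ) ^ 2) * volume (Metric.ball (0 : E3) 1) := by
  have hlip := gamma_lip hγ harc
  have hn0 : (0:ℝ) < n := by exact_mod_cast hn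
  set N : ℕ := ⌈L * n⌉₊ with hN
  have hsub : {x : E3 | Metric.infDist x (γ '' Set.Icc 0 L) ≤ 2 / n} ⊆
      ⋃ k ∈ Finset.range (N + 1), Metric.closedBall (γ (k / n)) (4 / n) := by
    intro x hx
    simp only [Set.mem_setOf_eq] at hx
    have hne : (γ '' Set.Icc 0 L).Nonempty :=
      ⟨γ 0, Set.mem_image_of_mem γ (Set.mem_Icc.2 ⟨le_refl 0, hL.le⟩)⟩
    have hlt : Metric.infDist x (γ '' Set.Icc 0 L) < 3 / n :=
      lt_of_le_of_lt hx (by gcongr <;> norm_num)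
    obtain ⟨y, hy, hxy⟩ := (Metric.infDist_lt_iff hne).1 hlt
    obtain ⟨s, hs, rfl⟩ := hy
    set k : ℕ := ⌊s * n⌋₊ with hk
    have hsn0 : 0 ≤ s * n := mul_nonneg hs.1 hn0.le
    have hkN : k < N + 1 := by
      have h1 : k ≤ ⌊L * n⌋₊ := Nat.floor_mono (by nlinarith [hs.2])
      have h2 : ⌊L * n⌋₊ ≤ N := Nat.floor_le_ceil _
      omega
    have hkn_mem : (k / n : ℝ) ∈ Set.Icc (0:ℝ) L := by
      constructor
      · positivity
      · rw [div_le_iff₀ hn0]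
        calc ((k:ℕ):ℝ) ≤ s * n := Nat.floor_le hsn0
          _ ≤ L * n := by nlinarith [hs.2]
    have hdist_s : |s - k / n| ≤ 1 / n := by
      rw [abs_le]
      constructor
      · have h3 : ((k:ℕ):ℝ) ≤ s * n := Nat.floor_le hsn0
        have h5 : (k:ℝ) / n ≤ s := by rw [div_le_iff₀ hn0]; nlinarith
        have h6 : (0:ℝ) ≤ 1 / n := by positivity
        linarith
      · have h4 : s * n < (k:ℝ) + 1 := Nat.lt_floor_add_one _
        have h5 : s ≤ (k:ℝ) / n + 1 / n := by
          rw [← add_div, le_div_iff₀ hn0]; linarith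
        linarith
    have hd2 : dist (γ s) (γ (k / n)) ≤ 1 / n := by
      calc dist (γ s) (γ (k / n)) ≤ 1 * dist s (k / n) :=
            lipschitzOnWith_iff_dist_le_mul.1 hlip s hs (k / n) hkn_mem
        _ = |s - k / n| := by rw [one_mul, Real.dist_eq]
        _ ≤ 1 / n := hdist_s
    refine Set.mem_biUnion (Finset.mem_range.2 hkN) ?_
    rw [Metric.mem_closedBall]
    calc dist x (γ (k / n)) ≤ dist x (γ s) + dist (γ s) (γ (k / n)) := dist_triangle _ _ _
      _ ≤ 3 / n + 1 / n := add_le_add hxy.le hd2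
      _ = 4 / n := by ring
  have hball : ∀ k : ℕ, volume (Metric.closedBall (γ (k / n)) (4 / n)) =
      ENNReal.ofReal ((4 / (n:ℝ)) ^ 3) * volume (Metric.ball (0 : E3) 1) := by
    intro k
    rw [Measure.addHaar_closedBall _ _ (by positivity)]
    congr 2
    rw [finrank_euclideanSpace_fin]
  have hNreal : ((N:ℝ) + 1) ≤ (L + 2) * n := by
    have h1 : (N:ℝ) < L * n + 1 := Nat.ceil_lt_add_one (by positivity)
    have h2 : (1:ℝ) ≤ n := by exact_mod_cast hn
    nlinarith
  calc volume {x : E3 | Metric.infDist x (γ '' Set.Icc 0 L) ≤ 2 / n}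
      ≤ volume (⋃ k ∈ Finset.range (N + 1), Metric.closedBall (γ (k / n)) (4 / n)) :=
        measure_mono hsub
    _ ≤ ∑ k ∈ Finset.range (N + 1), volume (Metric.closedBall (γ (k / n)) (4 / n)) :=
        measure_biUnion_finset_le _ _
    _ = ((N + 1 : ℕ) : ℝ≥0∞) *
        (ENNReal.ofReal ((4 / (n:ℝ)) ^ 3) * volume (Metric.ball (0 : E3) 1)) := by
        simp_rw [hball]
        rw [Finset.sum_const, Finset.card_range, nsmul_eq_mul]
    _ ≤ ENNReal.ofReal ((L + 2) * 64 / (n : ℝ) ^ 2) * volume (Metric.ball (0 : E3) 1) := by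
        have hkey : ((N + 1 : ℕ) : ℝ≥0∞) * ENNReal.ofReal ((4 / (n:ℝ)) ^ 3) ≤
            ENNReal.ofReal ((L + 2) * 64 / (n : ℝ) ^ 2) := by
          rw [← ENNReal.ofReal_natCast, ← ENNReal.ofReal_mul (by positivity)]
          apply ENNReal.ofReal_le_ofReal
          have hexp : ((N + 1 : ℕ) : ℝ) * (4 / (n:ℝ)) ^ 3 = ((N:ℝ) + 1) * (64 / (n:ℝ)^3) := by
            push_cast; ring
          rw [hexp]
          have hle : ((N:ℝ) + 1) * (64 / (n:ℝ)^3) ≤ ((L + 2) * n) * (64 / (n:ℝ)^3) :=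
            mul_le_mul_of_nonneg_right hNreal (by positivity)
          refine hle.trans (le_of_eq ?_)
          field_simp
        rw [← mul_assoc]
        exact mul_le_mul_left hkey _

/-- For a divergence-free smooth compactly supported φ and the cutoffs η_n around a C²
injective compact curve, g_n = φ · ∇η_n has zero mean and `‖g_n‖_{Lᵖ} ≲ n^{1−2/p}`. -/
theorem cutoff_divergence_estimates
    (γ : ℝ → E3) (L : ℝ) (hL : 0 < L)
    (hγ : ContDiff ℝ 2 γ) (hγinj : Set.InjOn γ (Set.Icc 0 L))
    (harc : ∀ s ∈ Set.Icc (0:ℝ) L, ‖deriv γ s‖ = 1)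
    (C : Set E3) (hC : C = γ '' Set.Icc 0 L)
    (χ : ℝ → ℝ) (hχ : ContDiff ℝ ∞ χ)
    (hχ0 : ∀ s : ℝ, s < 1 → χ s = 0) (hχ1 : ∀ s : ℝ, 2 < s → χ s = 1)
    (η : ℕ → E3 → ℝ) (hη : ∀ n x, η n x = χ (n * Metric.infDist x C))
    (φ : E3 → E3) (hφ : ContDiff ℝ ∞ φ) (hφsupp : HasCompactSupport φ)
    (hφdiv : ∀ x : E3, div3 φ x = 0)
    (g : ℕ → E3 → ℝ) (hg : ∀ n x, g n x = ⟪φ x, gradient (η n) x⟫) :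
    ∃ n₀ : ℕ, ∃ C₀ > 0, ∀ n : ℕ, n > n₀ →
      (∫ x : E3, g n x) = 0 ∧
      ∀ p : ℝ, 1 ≤ p →
        (∫ x : E3, |g n x| ^ p) ^ (1/p) ≤ C₀ * (n : ℝ) ^ (1 - 2/p) := by
  -- Lipschitz constant for χ
  have hχd : Differentiable ℝ χ := hχ.differentiable (by simp)
  have hderiv0 : ∀ s : ℝ, s ∉ Set.Icc (1:ℝ) 2 → deriv χ s = 0 := by
    intro s hs
    rw [Set.mem_Icc, not_and_or] at hs
    rcases hs with hs | hs
    · push_neg at hs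
      have heq : χ =ᶠ[nhds s] fun _ => 0 := by
        filter_upwards [Iio_mem_nhds hs] with t ht
        exact hχ0 t ht
      rw [heq.deriv_eq]
      exact deriv_const s 0
    · push_neg at hs
      have heq : χ =ᶠ[nhds s] fun _ => 1 := by
        filter_upwards [Ioi_mem_nhds hs] with t ht
        exact hχ1 t ht
      rw [heq.deriv_eq]
      exact deriv_const s 1
  have hderivc : Continuous (deriv χ) := hχ.continuous_deriv (by simp)
  obtain ⟨M₁, hM₁⟩ :=
    (isCompact_Icc (a := (1:ℝ)) (b := 2)).exists_bound_of_continuousOn hderivc.continuousOn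
  set Mχ : ℝ := max M₁ 0 with hMχdef
  have hMχ0 : 0 ≤ Mχ := le_max_right _ _
  have hχbound : ∀ s, ‖deriv χ s‖ ≤ Mχ := by
    intro s
    by_cases hs : s ∈ Set.Icc (1:ℝ) 2
    · exact le_trans (hM₁ s hs) (le_max_left _ _)
    · rw [hderiv0 s hs]; simpa using hMχ0
  have hχlip : LipschitzWith Mχ.toNNReal χ := by
    apply lipschitzWith_of_nnnorm_deriv_le hχd
    intro s
    rw [← NNReal.coe_le_coe, coe_nnnorm, Real.coe_toNNReal _ hMχ0]
    exact hχbound s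
  -- bound for φ
  obtain ⟨Bφ, hBφ⟩ := hφsupp.exists_bound_of_continuous hφ.continuous
  have hBφ0 : 0 ≤ Bφ := le_trans (norm_nonneg _) (hBφ 0)
  -- η is Lipschitz
  have hmul : ∀ n : ℕ, LipschitzWith (n : ℝ≥0) fun t : ℝ => (n:ℝ) * t := by
    intro n
    apply LipschitzWith.of_dist_le_mul
    intro a b
    simp only [Real.dist_eq, ← mul_sub, abs_mul, abs_of_nonneg (by positivity : (0:ℝ) ≤ (n:ℝ))]
    simp
  have hηlip : ∀ n : ℕ, LipschitzWith (Mχ.toNNReal * (n : ℝ≥0) * 1) (η n) := by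
    intro n
    have hcomp := (hχlip.comp (hmul n)).comp (lipschitz_infDist_pt (s := C))
    have heq : η n = (χ ∘ fun t : ℝ => (n:ℝ) * t) ∘ fun x : E3 => Metric.infDist x C := by
      funext x
      simp [Function.comp, hη n x]
    rw [heq]
    exact hcomp
  have hfdbd : ∀ n : ℕ, ∀ x : E3, ‖fderiv ℝ (η n) x‖ ≤ Mχ * n := by
    intro n x
    have h1 := norm_fderiv_le_of_lipschitz ℝ (hηlip n) (x₀ := x)
    have h2 : ((Mχ.toNNReal * (n : ℝ≥0) * 1 : ℝ≥0) : ℝ) = Mχ * n := by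
      push_cast
      rw [Real.coe_toNNReal _ hMχ0, mul_one]
    rwa [h2] at h1
  -- rewrite g via fderiv
  have hgf : ∀ n x, g n x = fderiv ℝ (η n) x (φ x) := by
    intro n x
    rw [hg n x, real_inner_comm]
    exact InnerProductSpace.toDual_symm_apply
  -- zero mean
  have hzero : ∀ n : ℕ, (∫ x : E3, g n x) = 0 := by
    intro n
    have heq : (fun x : E3 => g n x) = fun x : E3 => fderiv ℝ (η n) x (φ x) :=
      funext (hgf n)
    rw [heq, ibp_div (η n) (hηlip n) φ hφ hφsupp]
    simp [hφdiv]
  -- pointwise bound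
  have hptbd : ∀ n : ℕ, ∀ x : E3, |g n x| ≤ (Bφ * Mχ) * n := by
    intro n x
    rw [hgf n x, ← Real.norm_eq_abs]
    calc ‖fderiv ℝ (η n) x (φ x)‖ ≤ ‖fderiv ℝ (η n) x‖ * ‖φ x‖ :=
          (fderiv ℝ (η n) x).le_opNorm (φ x)
      _ ≤ (Mχ * n) * Bφ :=
          mul_le_mul (hfdbd n x) (hBφ x) (norm_nonneg _) (by positivity)
      _ = (Bφ * Mχ) * n := by ring
  -- support
  have hsupp : ∀ n : ℕ, 1 ≤ n → ∀ x : E3, g n x ≠ 0 →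
      x ∈ tsupport φ ∩ {y : E3 | Metric.infDist y C ≤ 2 / n} := by
    intro n hn x hgx
    have hn0 : (0:ℝ) < n := by exact_mod_cast hn
    constructor
    · by_contra hx
      exact hgx (by rw [hgf n x, image_eq_zero_of_notMem_tsupport hx]; simp)
    · simp only [Set.mem_setOf_eq]
      by_contra hx
      push_neg at hx
      apply hgx
      rw [hgf n x]
      have hopen : IsOpen {y : E3 | 2 / (n:ℝ) < Metric.infDist y C} :=
        isOpen_lt continuous_const (continuous_infDist_pt C)
      have heq : η n =ᶠ[nhds x] fun _ => 1 := by
        filter_upwards [hopen.mem_nhds hx] with y hy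
        rw [hη n y]
        apply hχ1
        have hy' : (2:ℝ) < Metric.infDist y C * n := (div_lt_iff₀ hn0).1 hy
        linarith [hy', mul_comm (Metric.infDist y C) ((n:ℝ))]
      rw [heq.fderiv_eq]
      simp
  -- measure of the support set
  set vB : ℝ := (volume (Metric.ball (0:E3) 1)).toReal with hvBdef
  set A : ℝ := (L + 2) * 64 * vB with hAdef
  have hvB0 : 0 ≤ vB := ENNReal.toReal_nonneg
  have hA0 : 0 ≤ A := by
    have : (0:ℝ) ≤ L + 2 := by linarith [hL.le]
    positivity
  have hmeas : ∀ n : ℕ, 1 ≤ n →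
      (volume (tsupport φ ∩ {y : E3 | Metric.infDist y C ≤ 2 / n})).toReal ≤ A / n^2 := by
    intro n hn
    have hn0 : (0:ℝ) < n := by exact_mod_cast hn
    have h1 : volume (tsupport φ ∩ {y : E3 | Metric.infDist y C ≤ 2 / n}) ≤
        ENNReal.ofReal ((L + 2) * 64 / (n : ℝ) ^ 2) * volume (Metric.ball (0 : E3) 1) := by
      refine le_trans (measure_mono Set.inter_subset_right) ?_
      rw [hC]
      exact tube_measure hL (hγ.differentiable (by norm_num)) harc hn
    have hfin : ENNReal.ofReal ((L + 2) * 64 / (n : ℝ) ^ 2) *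
        volume (Metric.ball (0 : E3) 1) ≠ ⊤ :=
      ENNReal.mul_ne_top ENNReal.ofReal_ne_top measure_ball_lt_top.ne
    have h2 := ENNReal.toReal_mono hfin h1
    rw [ENNReal.toReal_mul, ENNReal.toReal_ofReal (by positivity)] at h2
    calc (volume (tsupport φ ∩ {y : E3 | Metric.infDist y C ≤ 2 / n})).toReal
        ≤ (L + 2) * 64 / (n : ℝ) ^ 2 * vB := h2
      _ = A / n ^ 2 := by rw [hAdef]; ring
  -- conclusion
  set K₀ : ℝ := Bφ * Mχ with hK₀def
  have hK₀0 : 0 ≤ K₀ := mul_nonneg hBφ0 hMχ0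
  refine ⟨0, (K₀ + 1) * (A + 1), by positivity, ?_⟩
  intro n hn
  have hn1 : 1 ≤ n := hn
  have hn0 : (0:ℝ) < n := by exact_mod_cast hn1
  refine ⟨hzero n, ?_⟩
  intro p hp
  have hp0 : 0 < p := lt_of_lt_of_le one_pos hp
  set Sn : Set E3 := tsupport φ ∩ {y : E3 | Metric.infDist y C ≤ 2 / n} with hSndef
  have hSnm : MeasurableSet Sn :=
    (isClosed_tsupport φ).measurableSet.inter
      (isClosed_le (continuous_infDist_pt C) continuous_const).measurableSet
  have hSnfin : volume Sn < ⊤ :=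
    lt_of_le_of_lt (measure_mono Set.inter_subset_left)
      (IsCompact.measure_lt_top hφsupp)
  have hind : Integrable (Sn.indicator fun _ => (K₀ * n) ^ p) := by
    rw [integrable_indicator_iff hSnm]
    exact integrableOn_const hSnfin.ne
  have hmono : ∀ x : E3, |g n x| ^ p ≤ Sn.indicator (fun _ => (K₀ * n) ^ p) x := by
    intro x
    by_cases hx : x ∈ Sn
    · rw [Set.indicator_of_mem hx]
      exact Real.rpow_le_rpow (abs_nonneg _) (hptbd n x) hp0.le
    · rw [Set.indicator_of_notMem hx]
      by_cases hgx : g n x = 0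
      · rw [hgx, abs_zero, Real.zero_rpow hp0.ne']
      · exact absurd (hsupp n hn1 x hgx) hx
  have hint_le : (∫ x : E3, |g n x| ^ p) ≤ (K₀ * n) ^ p * (volume Sn).toReal := by
    calc (∫ x : E3, |g n x| ^ p) ≤ ∫ x : E3, Sn.indicator (fun _ => (K₀ * n) ^ p) x :=
          integral_mono_of_nonneg
            (Filter.Eventually.of_forall fun x => Real.rpow_nonneg (abs_nonneg _) p)
            hind (Filter.Eventually.of_forall hmono)
      _ = (volume Sn).toReal • ((K₀ * n) ^ p) := by
          rw [integral_indicator hSnm, setIntegral_const]; rfl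
      _ = (K₀ * n) ^ p * (volume Sn).toReal := by rw [smul_eq_mul, mul_comm]
  have hK₀n0 : 0 ≤ K₀ * n := by positivity
  have h2 : (∫ x : E3, |g n x| ^ p) ^ (1/p) ≤ ((K₀ * n) ^ p * (A / n ^ 2)) ^ (1/p) := by
    apply Real.rpow_le_rpow (integral_nonneg fun x => Real.rpow_nonneg (abs_nonneg _) p)
      (le_trans hint_le
        (mul_le_mul_of_nonneg_left (hmeas n hn1) (Real.rpow_nonneg hK₀n0 p)))
      (by positivity)
  have h3 : ((K₀ * n) ^ p * (A / n ^ 2)) ^ (1/p) = (K₀ * n) * (A / n ^ 2) ^ (1/p) := by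
    rw [Real.mul_rpow (Real.rpow_nonneg hK₀n0 p) (by positivity),
      ← Real.rpow_mul hK₀n0, mul_one_div, div_self hp0.ne', Real.rpow_one]
  have h4 : (A / n ^ 2) ^ (1/p) ≤ (A + 1) * ((n:ℝ) ^ (-(2/p))) := by
    rw [Real.div_rpow hA0 (by positivity)]
    have hnum : A ^ (1/p) ≤ A + 1 := by
      by_cases hA1 : 1 ≤ A
      · calc A ^ (1/p) ≤ A ^ (1:ℝ) :=
            Real.rpow_le_rpow_of_exponent_le hA1 (by rw [div_le_one hp0]; exact hp)
          _ = A := Real.rpow_one A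
          _ ≤ A + 1 := by linarith
      · push_neg at hA1
        calc A ^ (1/p) ≤ 1 := Real.rpow_le_one hA0 hA1.le (by positivity)
          _ ≤ A + 1 := by linarith
    have hden : (((n:ℝ) ^ 2 : ℝ)) ^ (1/p) = (n:ℝ) ^ (2/p) := by
      rw [show ((n:ℝ) ^ 2 : ℝ) = (n:ℝ) ^ ((2:ℕ):ℝ) from by rw [Real.rpow_natCast]]
      rw [← Real.rpow_mul hn0.le]
      congr 1
      push_cast
      ring
    rw [hden, div_eq_mul_inv, ← Real.rpow_neg hn0.le]
    exact mul_le_mul_of_nonneg_right hnum (Real.rpow_nonneg hn0.le _)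
  have hnn : (n:ℝ) ^ (1 - 2/p) = (n:ℝ) * (n:ℝ) ^ (-(2/p)) := by
    rw [sub_eq_add_neg, Real.rpow_add hn0, Real.rpow_one]
  calc (∫ x : E3, |g n x| ^ p) ^ (1/p) ≤ ((K₀ * n) ^ p * (A / n ^ 2)) ^ (1/p) := h2
    _ = (K₀ * n) * (A / n ^ 2) ^ (1/p) := h3
    _ ≤ (K₀ * n) * ((A + 1) * ((n:ℝ) ^ (-(2/p)))) := mul_le_mul_of_nonneg_left h4 hK₀n0
    _ = (K₀ * (A + 1)) * ((n:ℝ) * (n:ℝ) ^ (-(2/p))) := by ring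
    _ = (K₀ * (A + 1)) * (n:ℝ) ^ (1 - 2/p) := by rw [hnn]
    _ ≤ (K₀ + 1) * (A + 1) * (n:ℝ) ^ (1 - 2/p) := by
        apply mul_le_mul_of_nonneg_right _ (Real.rpow_nonneg hn0.le _)
        nlinarith
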